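/- Let L be a field with a surjective discrete valuation ν, and K ⊆ L a subfield with ν(K*) = ℤ whose residue field k has characteristic 0. Suppose a finite group G acts faithfully on L by field automorphisms preserving ν and fixing K pointwise. Then the induced action of G on the residue field l of L is also faithful. -/

import Mathlib

/-- if a finite group `G` acts faithfully on `L` by automorphisms
preserving a surjective discrete valuation `ν` and fixing pointwise a subfield `K`
with `ν(K*) = ℤ` whose residue field has characteristic `0`, then the induced action
of `G` on the residue field of `L` is faithful: any element acting trivially on the
residue field (i.e. with `ν(σ(x) - x) ≥ 1` for all `x` in the valuation ring)
is the identity. -/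
theorem stmt3 (L : Type*) [Field L]
    (v : Valuation L (WithZero (Multiplicative ℤ)))
    (hv : Function.Surjective v)
    (K : Subfield L)
    (hK : Function.Surjective (v.comap K.subtype))
    [CharZero (IsLocalRing.ResidueField (v.comap K.subtype).valuationSubring)]
    (G : Type*) [Group G] [Finite G]
    (φ : G →* (L ≃+* L))
    (hfaith : Function.Injective φ)
    (hpres : ∀ (σ : G) (x : L), v (φ σ x) = v x)
    (hfix : ∀ (σ : G), ∀ x ∈ K, φ σ x = x) :
    ∀ σ : G, (∀ x : L, v x ≤ 1 →
        v (φ σ x - x) ≤ ((Multiplicative.ofAdd (-1 : ℤ) : Multiplicative ℤ) :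
          WithZero (Multiplicative ℤ))) → σ = 1 := by
  intro σ hσ
  by_contra hne
  set ε : WithZero (Multiplicative ℤ) :=
    ((Multiplicative.ofAdd (-1 : ℤ) : Multiplicative ℤ) : WithZero (Multiplicative ℤ)) with hεdef
  have hεlt : ε < 1 := by
    rw [hεdef]
    norm_cast
  have hmulapp : ∀ (a b : G) (z : L), φ (a * b) z = φ a (φ b z) := by
    intro a b z
    rw [map_mul]
    rfl
  -- step 0 : positive integers have valuation 1
  have hnat : ∀ n : ℕ, 0 < n → v (n : L) = 1 := by
    intro n hn
    set v' := v.comap K.subtype with hv'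
    set O := v'.valuationSubring with hO
    have hres : IsLocalRing.residue O (n : O) ≠ 0 := by
      rw [map_natCast]
      exact_mod_cast Nat.cast_ne_zero.mpr hn.ne'
    have hu : IsUnit ((n : O)) := (IsLocalRing.residue_ne_zero_iff_isUnit _).mp hres
    obtain ⟨u, hu⟩ := hu
    have hO1 : (n : O) * ↑u⁻¹ = 1 := by rw [← hu]; exact u.mul_inv
    have h1 : ((n : O) : K) * ((↑(u⁻¹) : O) : K) = 1 := by
      exact_mod_cast congrArg Subtype.val hO1
    have hle1 : v' ((n : O) : K) ≤ 1 := (n : O).2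
    have hle2 : v' ((↑(u⁻¹) : O) : K) ≤ 1 := (↑(u⁻¹) : O).2
    have hmul : v' ((n : O) : K) * v' ((↑(u⁻¹) : O) : K) = 1 := by
      rw [← map_mul, h1, map_one]
    have h2 : (1 : WithZero (Multiplicative ℤ)) ≤ v' ((n : O) : K) := by
      calc (1 : WithZero (Multiplicative ℤ)) = _ := hmul.symm
      _ ≤ v' ((n : O) : K) * 1 := mul_le_mul_right hle2 _
      _ = v' ((n : O) : K) := mul_one _
    have hv1 : v' ((n : O) : K) = 1 := le_antisymm hle1 h2
    have he : (((n : O) : K) : L) = (n : L) := by push_cast; ring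
    have hv2 : v ((((n : O) : K)) : L) = 1 := hv1
    rwa [he] at hv2
  -- get x not fixed
  have hφne : φ σ ≠ 1 := fun h => hne (hfaith (by rw [h, map_one]))
  have hx : ∃ x : L, φ σ x ≠ x := by
    by_contra h
    push_neg at h
    exact hφne (RingEquiv.ext h)
  obtain ⟨x, hx⟩ := hx
  -- key A : scaling
  have keyA : ∀ z : L, v (φ σ z - z) ≤ ε * v z := by
    intro z
    rcases eq_or_ne z 0 with rfl | hz
    · simp
    obtain ⟨c, hc⟩ := hK (v z)
    have hc' : v (c : L) = v z := hc
    have hz1 : v (z / (c : L)) ≤ 1 := by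
      rw [map_div₀, hc', div_self]
      exact v.ne_zero_iff.mpr hz
    have h1 := hσ _ hz1
    have hfc : φ σ (c : L) = (c : L) := hfix σ _ c.2
    have h2 : φ σ (z / (c : L)) - z / (c : L) = (φ σ z - z) / (c : L) := by
      rw [map_div₀, hfc, sub_div]
    rw [h2, map_div₀, hc'] at h1
    calc v (φ σ z - z) = v (φ σ z - z) / v z * v z := by
          rw [div_mul_cancel₀]
          exact v.ne_zero_iff.mpr hz
    _ ≤ ε * v z := mul_le_mul_left h1 _
  -- key B : powers
  have keyB : ∀ (i : ℕ) (y : L), v (φ (σ ^ i) y - y) ≤ v (φ σ y - y) := by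
    intro i y
    induction i with
    | zero =>
      have h0 : φ (σ ^ 0) y = y := by rw [pow_zero, map_one]; rfl
      rw [h0, sub_self, map_zero]
      exact zero_le'
    | succ i ih =>
      have e1 : φ (σ ^ (i + 1)) y - y =
          φ (σ ^ i) (φ σ y - y) + (φ (σ ^ i) y - y) := by
        rw [pow_succ, hmulapp, map_sub]
        ring
      rw [e1]
      refine le_trans (v.map_add _ _) (max_le ?_ ih)
      rw [hpres]
  set y := φ σ x - x with hy
  have hy0 : y ≠ 0 := sub_ne_zero.mpr hx
  set m := orderOf σ with hm
  have hm0 : 0 < m := orderOf_pos σ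
  have hS0 : ∑ i ∈ Finset.range m, φ (σ ^ i) y = 0 := by
    have h3 : ∀ i : ℕ, φ (σ ^ i) y = φ (σ ^ (i + 1)) x - φ (σ ^ i) x := by
      intro i
      rw [hy, map_sub, pow_succ, hmulapp]
    simp_rw [h3]
    rw [Finset.sum_range_sub (fun i => φ (σ ^ i) x), pow_orderOf_eq_one, pow_zero, map_one]
    simp
  have hS2 : ∑ i ∈ Finset.range m, φ (σ ^ i) y
      = (m : L) * y + ∑ i ∈ Finset.range m, (φ (σ ^ i) y - y) := by
    rw [Finset.sum_sub_distrib, Finset.sum_const, Finset.card_range, nsmul_eq_mul]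
    ring
  have hR : v (∑ i ∈ Finset.range m, (φ (σ ^ i) y - y)) ≤ ε * v y :=
    v.map_sum_le (fun i _ => le_trans (keyB i y) (keyA y))
  have hmy : v ((m : L) * y) = v y := by
    rw [map_mul, hnat m hm0, one_mul]
  have hvy : v y ≠ 0 := v.ne_zero_iff.mpr hy0
  have hlt : ε * v y < v y := by
    calc ε * v y = v y * ε := mul_comm _ _
    _ < v y * 1 := mul_lt_mul_of_pos_left hεlt (zero_lt_iff.mpr hvy)
    _ = v y := mul_one _
  have hfin : v (∑ i ∈ Finset.range m, φ (σ ^ i) y) = v y := by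
    rw [hS2, Valuation.map_add_eq_of_lt_left]
    · exact hmy
    · rw [hmy]
      exact lt_of_le_of_lt hR hlt
  rw [hS0, map_zero] at hfin
  exact hvy hfin.symm
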